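/- Let V ⊆ K[G] be an S-module and T₁, T₂ ⊆ G subsets whose simple quantities lie in V. Then the simple quantities of T₁ ∩ T₂ and of T₁ ∪ T₂ also lie in V. -/

import Mathlib

open Finset

/-- S-modules are closed under intersections and unions of simple quantities. -/
theorem stmt_1 {K : Type*} [Field K] {G : Type*} [Group G] [Fintype G] [DecidableEq G]
    (V : Submodule K (MonoidAlgebra K G)) (P : Finpartition (univ : Finset G))
    (hV : V = Submodule.span K
      ((fun C : Finset G => ∑ g ∈ C, MonoidAlgebra.single g (1 : K)) '' ↑P.parts))
    (T₁ T₂ : Finset G)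
    (h₁ : (∑ g ∈ T₁, MonoidAlgebra.single g (1 : K)) ∈ V)
    (h₂ : (∑ g ∈ T₂, MonoidAlgebra.single g (1 : K)) ∈ V) :
    (∑ g ∈ T₁ ∩ T₂, MonoidAlgebra.single g (1 : K)) ∈ V ∧
    (∑ g ∈ T₁ ∪ T₂, MonoidAlgebra.single g (1 : K)) ∈ V := by
  set f : Finset G → MonoidAlgebra K G :=
    fun C => ∑ g ∈ C, MonoidAlgebra.single g (1 : K) with hf
  have coeff : ∀ (C : Finset G) (g : G), (f C).coeff g = if g ∈ C then (1 : K) else 0 := by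
    intro C g
    simp only [hf]
    rw [MonoidAlgebra.coeff_sum, Finset.sum_apply']
    simp [MonoidAlgebra.coeff_single, Finsupp.single_apply]
  -- everything in V has coefficients constant on parts
  let W : Submodule K (MonoidAlgebra K G) :=
    { carrier := {x | ∀ C ∈ P.parts, ∀ g ∈ C, ∀ g' ∈ C, x.coeff g = x.coeff g'}
      add_mem' := by
        intro a b ha hb C hC g hg g' hg'
        rw [MonoidAlgebra.coeff_add, Finsupp.add_apply, Finsupp.add_apply, ha C hC g hg g' hg',
          hb C hC g hg g' hg']
      zero_mem' := by intro C hC g hg g' hg'; simp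
      smul_mem' := by
        intro c a ha C hC g hg g' hg'
        rw [MonoidAlgebra.coeff_smul, Finsupp.smul_apply, Finsupp.smul_apply, ha C hC g hg g' hg'] }
  have hVW : V ≤ W := by
    rw [hV]
    apply Submodule.span_le.2
    rintro x ⟨C, hC, rfl⟩
    intro C' hC' g hg g' hg'
    rw [coeff, coeff]
    have : g ∈ C ↔ g' ∈ C := by
      constructor
      · intro h
        have hCC : C = C' := P.eq_of_mem_parts hC hC' h hg
        rw [hCC]; exact hg'
      · intro h
        have hCC : C = C' := P.eq_of_mem_parts hC hC' h hg'
        rw [hCC]; exact hg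
    simp [this]
  -- if f T ∈ V then every part meeting T is contained in T
  have hmem : ∀ T : Finset G, f T ∈ V → ∀ C ∈ P.parts, ∀ g ∈ C, g ∈ T → C ⊆ T := by
    intro T hT C hC g hg hgT g' hg'
    have := hVW hT C hC g hg g' hg'
    rw [coeff, coeff, if_pos hgT] at this
    by_contra h
    rw [if_neg h] at this
    exact one_ne_zero this
  -- conversely, if T is a union of parts, f T ∈ V
  have hgood : ∀ T : Finset G, (∀ C ∈ P.parts, ∀ g ∈ C, g ∈ T → C ⊆ T) → f T ∈ V := by
    intro T hT
    set S := P.parts.filter fun C => C ⊆ T with hS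
    have hTeq : T = S.biUnion id := by
      rw [hS]
      ext g
      simp only [mem_biUnion, mem_filter, id]
      constructor
      · intro hgT
        obtain ⟨C, hC, hgC⟩ := P.exists_mem (mem_univ g)
        exact ⟨C, ⟨hC, hT C hC g hgC hgT⟩, hgC⟩
      · rintro ⟨C, ⟨hC, hCT⟩, hgC⟩
        exact hCT hgC
    have hdisj : Set.PairwiseDisjoint (↑S) (id : Finset G → Finset G) := by
      intro a ha b hb hab
      rw [hS] at ha hb
      exact P.disjoint (mem_filter.1 ha).1 (mem_filter.1 hb).1 hab
    have hsum : f T = ∑ C ∈ S, f C := by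
      simp only [hf]
      rw [hTeq, Finset.sum_biUnion hdisj]
      rfl
    rw [hsum, hV]
    apply Submodule.sum_mem
    intro C hC
    rw [hS] at hC
    exact Submodule.subset_span ⟨C, (mem_filter.1 hC).1, rfl⟩
  constructor
  · apply hgood
    intro C hC g hg hgT
    have h1 := hmem T₁ h₁ C hC g hg (mem_inter.1 hgT).1
    have h2 := hmem T₂ h₂ C hC g hg (mem_inter.1 hgT).2
    intro x hx
    exact mem_inter.2 ⟨h1 hx, h2 hx⟩
  · apply hgood
    intro C hC g hg hgT
    rcases mem_union.1 hgT with h | h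
    · intro x hx
      exact mem_union_left _ (hmem T₁ h₁ C hC g hg h hx)
    · intro x hx
      exact mem_union_right _ (hmem T₂ h₂ C hC g hg h hx)
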